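/- (Theorem 3) Let n, N, ℓ ≥ 1, δ > 0, β > 0 and γ > 0. Suppose V ∈ ℝ[x_1,…,x_n] satisfies V(x) ≥ δ · ‖x‖_{2ℓ}^{2ℓ} for all x ∈ ℝⁿ; for each i = 1, …, N let p_i ∈ ℝ[x_1,…,x_n] be SOS and suppose the polynomial -(∇V · f_i) - p_i · (Σ_j x_j² - β) - δ · Σ_j x_j^{2ℓ} is SOS; and suppose there exists an SOS polynomial q ∈ ℝ[x_1,…,x_n] such that -(V - γ) + q · (Σ_j x_j² - β) is SOS. Then the sublevel set B = {x ∈ ℝⁿ : V(x) ≤ γ} is compact and is an absorbing set for the switched system whose i-th vector field is x ↦ (f_{i,1}(x), …, f_{i,n}(x)). -/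

import Mathlib

open MvPolynomial

/-- A polynomial is a sum of squares (SOS) if it is a finite sum of squares of
polynomials. -/
def IsSOS {n : ℕ} (p : MvPolynomial (Fin n) ℝ) : Prop :=
  ∃ (k : ℕ) (g : Fin k → MvPolynomial (Fin n) ℝ), p = ∑ j, g j ^ 2

/-- A solution of the switched system whose `i`-th vector field is
`x ↦ (f_{i,1}(x), …, f_{i,n}(x))`, given by polynomials `f i j`. -/
def IsSwitchedSolution {n N : ℕ} (f : Fin N → Fin n → MvPolynomial (Fin n) ℝ)
    (x : ℝ → (Fin n → ℝ)) : Prop :=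
  ∀ t : ℝ, 0 ≤ t → ∃ i : Fin N,
    HasDerivWithinAt x (fun j => eval (x t) (f i j)) (Set.Ici 0) t

/-- `M` is positively invariant for the switched system. -/
def PositivelyInvariant {n N : ℕ} (f : Fin N → Fin n → MvPolynomial (Fin n) ℝ)
    (M : Set (Fin n → ℝ)) : Prop :=
  ∀ x : ℝ → (Fin n → ℝ), IsSwitchedSolution f x →
    x 0 ∈ M → ∀ t : ℝ, 0 ≤ t → x t ∈ M

/-- `M` is an absorbing set for the switched system: it is positively invariant and
every compact set is absorbed into `M` after some uniform time. -/
def AbsorbingSet {n N : ℕ} (f : Fin N → Fin n → MvPolynomial (Fin n) ℝ)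
    (M : Set (Fin n → ℝ)) : Prop :=
  PositivelyInvariant f M ∧
    ∀ C : Set (Fin n → ℝ), IsCompact C →
      ∃ tC : ℝ, 0 ≤ tC ∧
        ∀ x : ℝ → (Fin n → ℝ), IsSwitchedSolution f x →
          x 0 ∈ C → ∀ t : ℝ, tC ≤ t → x t ∈ M

/-- Evaluation of an SOS polynomial is nonnegative. -/
lemma IsSOS.eval_nonneg {n : ℕ} {p : MvPolynomial (Fin n) ℝ} (h : IsSOS p)
    (x : Fin n → ℝ) : 0 ≤ eval x p := by
  obtain ⟨k, g, rfl⟩ := h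
  simp only [map_sum, map_pow]
  exact Finset.sum_nonneg fun j _ => sq_nonneg _

/-- Chain rule: derivative of `t ↦ eval (x t) P` along a differentiable curve. -/
lemma hasDerivWithinAt_eval_comp {n : ℕ} (P : MvPolynomial (Fin n) ℝ)
    {x : ℝ → Fin n → ℝ} {v : Fin n → ℝ} {s : Set ℝ} {t : ℝ}
    (hx : HasDerivWithinAt x v s t) :
    HasDerivWithinAt (fun τ => eval (x τ) P)
      (∑ j, eval (x t) (pderiv j P) * v j) s t := by
  classical
  induction P using MvPolynomial.induction_on with
  | C a =>
      simpa [pderiv_C] using (hasDerivWithinAt_const t s (a : ℝ))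
  | add p q hp hq =>
      have : HasDerivWithinAt (fun τ => eval (x τ) p + eval (x τ) q) _ s t := hp.add hq
      simpa [map_add, add_mul, Finset.sum_add_distrib] using this
  | mul_X p i hp =>
      have hxi : HasDerivWithinAt (fun τ => x τ i) (v i) s t :=
        (hasDerivWithinAt_pi.1 hx) i
      have hmul : HasDerivWithinAt (fun τ => eval (x τ) p * x τ i) _ s t := hp.mul hxi
      have hval : ∑ j, eval (x t) (pderiv j (p * X i)) * v j
          = (∑ j, eval (x t) (pderiv j p) * v j) * (x t i)
            + eval (x t) p * v i := by
        simp only [pderiv_mul, map_add, map_mul, eval_X, add_mul,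
          Finset.sum_add_distrib, Finset.sum_mul]
        congr 1
        · exact Finset.sum_congr rfl fun j _ => by ring
        · rw [Finset.sum_eq_single i]
          · simp
          · intro j _ hji
            simp [pderiv_X, Pi.single_apply, hji]
          · simp
      rw [hval]
      simpa only [map_mul, eval_X] using hmul

/-- Theorem 3: under the SOS certificates of Theorems 2 and 3, the sublevel set
`B = {x : V(x) ≤ γ}` is compact and is an absorbing set for the switched system. -/
theorem sublevel_is_absorbing_of_sos {n N ℓ : ℕ} (hn : 1 ≤ n) (hN : 1 ≤ N) (hℓ : 1 ≤ ℓ)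
    (δ β γ : ℝ) (hδ : 0 < δ) (hβ : 0 < β) (hγ : 0 < γ)
    (f : Fin N → Fin n → MvPolynomial (Fin n) ℝ)
    (V : MvPolynomial (Fin n) ℝ)
    (hVlb : ∀ x : Fin n → ℝ, δ * ∑ j, x j ^ (2 * ℓ) ≤ eval x V)
    (p : Fin N → MvPolynomial (Fin n) ℝ) (hp : ∀ i, IsSOS (p i))
    (hsos : ∀ i, IsSOS
      (-(∑ j, pderiv j V * f i j)
        - p i * ((∑ j, X j ^ 2) - C β)
        - C δ * ∑ j, X j ^ (2 * ℓ)))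
    (q : MvPolynomial (Fin n) ℝ) (hq : IsSOS q)
    (hqsos : IsSOS (-(V - C γ) + q * ((∑ j, X j ^ 2) - C β))) :
    IsCompact {x : Fin n → ℝ | eval x V ≤ γ} ∧
      AbsorbingSet f {x : Fin n → ℝ | eval x V ≤ γ} := by
  classical
  have hn0 : (0 : ℝ) < (n : ℝ) := by exact_mod_cast hn
  -- the positive constant c with `β ≤ ∑ xⱼ² → c ≤ ∑ xⱼ^(2ℓ)`
  set c : ℝ := β ^ ℓ / (n : ℝ) ^ (ℓ - 1) with hc
  have hcpos : 0 < c := by positivity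
  have hpowsum : ∀ y : Fin n → ℝ, β ≤ ∑ j, y j ^ 2 → c ≤ ∑ j, y j ^ (2 * ℓ) := by
    intro y hy
    have hnn : ∀ j ∈ (Finset.univ : Finset (Fin n)), (0 : ℝ) ≤ y j ^ 2 :=
      fun j _ => sq_nonneg _
    have key := pow_sum_div_card_le_sum_pow (f := fun j => y j ^ 2) hnn (ℓ - 1)
    have hℓ' : ℓ - 1 + 1 = ℓ := Nat.succ_pred_eq_of_pos hℓ
    rw [hℓ'] at key
    have hcard : ((Finset.univ : Finset (Fin n)).card : ℝ) = (n : ℝ) := by simp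
    rw [hcard] at key
    have h1 : β ^ ℓ ≤ (∑ j, y j ^ 2) ^ ℓ :=
      pow_le_pow_left₀ hβ.le hy ℓ
    have h2 : β ^ ℓ / (n : ℝ) ^ (ℓ - 1) ≤ (∑ j, y j ^ 2) ^ ℓ / (n : ℝ) ^ (ℓ - 1) := by
      gcongr
    have h3 : (∑ j, y j ^ 2) ^ ℓ / (n : ℝ) ^ (ℓ - 1) ≤ ∑ j, (y j ^ 2) ^ ℓ := key
    have h4 : ∑ j, (y j ^ 2) ^ ℓ = ∑ j, y j ^ (2 * ℓ) := by
      refine Finset.sum_congr rfl fun j _ => ?_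
      rw [← pow_mul]
    calc c = β ^ ℓ / (n : ℝ) ^ (ℓ - 1) := hc
      _ ≤ (∑ j, y j ^ 2) ^ ℓ / (n : ℝ) ^ (ℓ - 1) := h2
      _ ≤ ∑ j, (y j ^ 2) ^ ℓ := h3
      _ = ∑ j, y j ^ (2 * ℓ) := h4
  -- the ball `∑ xⱼ² ≤ β` is contained in the sublevel set
  have hball : ∀ y : Fin n → ℝ, (∑ j, y j ^ 2) ≤ β → eval y V ≤ γ := by
    intro y hy
    have h0 := hqsos.eval_nonneg y
    have hqy := hq.eval_nonneg y
    simp only [map_add, map_neg, map_sub, map_mul, map_sum, map_pow, eval_C, eval_X] at h0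
    nlinarith [mul_nonpos_of_nonneg_of_nonpos hqy (sub_nonpos.2 hy)]
  -- the decrease condition outside the ball
  have hdecr : ∀ (i : Fin N) (y : Fin n → ℝ), β ≤ ∑ j, y j ^ 2 →
      eval y (∑ j, pderiv j V * f i j) ≤ -(δ * c) := by
    intro i y hy
    have h0 := (hsos i).eval_nonneg y
    have hpy := (hp i).eval_nonneg y
    simp only [map_sub, map_neg, map_mul, map_sum, map_pow, eval_C, eval_X] at h0 ⊢
    have hT : c ≤ ∑ j, y j ^ (2 * ℓ) := hpowsum y hy
    nlinarith [mul_nonneg hpy (sub_nonneg.2 hy), mul_le_mul_of_nonneg_left hT hδ.le]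
  -- derivative data along any solution
  have deriv_ex : ∀ (x : ℝ → Fin n → ℝ), IsSwitchedSolution f x →
      ∃ W' : ℝ → ℝ, ∀ t : ℝ, 0 ≤ t →
        HasDerivWithinAt (fun τ => eval (x τ) V) (W' t) (Set.Ici t) t ∧
        (γ < eval (x t) V → W' t ≤ -(δ * c)) := by
    intro x hx
    have : ∀ t : ℝ, ∃ d : ℝ, 0 ≤ t →
        HasDerivWithinAt (fun τ => eval (x τ) V) d (Set.Ici t) t ∧
        (γ < eval (x t) V → d ≤ -(δ * c)) := by
      intro t
      by_cases ht : 0 ≤ t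
      · obtain ⟨i, hi⟩ := hx t ht
        refine ⟨eval (x t) (∑ j, pderiv j V * f i j), fun _ => ?_⟩
        constructor
        · have hmono : HasDerivWithinAt x (fun j => eval (x t) (f i j))
              (Set.Ici t) t := hi.mono (Set.Ici_subset_Ici.2 ht)
          have := hasDerivWithinAt_eval_comp V hmono
          simpa [map_sum, map_mul] using this
        · intro hgt
          have hyβ : β ≤ ∑ j, x t j ^ 2 := by
            by_contra hcon
            exact absurd (hball (x t) (le_of_not_ge hcon)) (not_le.2 hgt)
          exact hdecr i (x t) hyβ
      · exact ⟨0, fun h => absurd h ht⟩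
    choose W' hW' using this
    exact ⟨W', fun t ht => hW' t ht⟩
  -- continuity of `t ↦ eval (x t) V` along any solution
  have contW : ∀ (x : ℝ → Fin n → ℝ), IsSwitchedSolution f x →
      ContinuousOn (fun τ => eval (x τ) V) (Set.Ici (0 : ℝ)) := by
    intro x hx
    have hxc : ContinuousOn x (Set.Ici (0 : ℝ)) := fun t ht =>
      ((hx t ht).choose_spec).continuousWithinAt
    exact (MvPolynomial.continuous_eval V).comp_continuousOn hxc
  -- positive invariance, starting at any time `a`
  have inv : ∀ (x : ℝ → Fin n → ℝ), IsSwitchedSolution f x →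
      ∀ a b : ℝ, 0 ≤ a → a ≤ b → eval (x a) V ≤ γ → eval (x b) V ≤ γ := by
    intro x hx a b ha hab hWa
    obtain ⟨W', hW'⟩ := deriv_ex x hx
    have hsub : Set.Icc a b ⊆ Set.Ici (0 : ℝ) := fun s hs => le_trans ha hs.1
    have hcont : ContinuousOn (fun τ => eval (x τ) V) (Set.Icc a b) :=
      (contW x hx).mono hsub
    have key : ∀ ε : ℝ, 0 < ε → eval (x b) V ≤ γ + ε := by
      intro ε hε
      have := image_le_of_deriv_right_lt_deriv_boundary' (f := fun τ => eval (x τ) V)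
        (f' := W') (a := a) (b := b) hcont
        (fun s hs => (hW' s (le_trans ha hs.1)).1)
        (B := fun _ => γ + ε) (B' := fun _ => 0)
        (hWa.trans (by linarith : γ ≤ γ + ε)) continuousOn_const
        (fun s _ => hasDerivWithinAt_const s _ _)
        (fun s hs heq => by
          have heq' : eval (x s) V = γ + ε := heq
          have hgt : γ < eval (x s) V := by rw [heq']; linarith
          have hle := (hW' s (le_trans ha hs.1)).2 hgt
          show W' s < (0 : ℝ)
          nlinarith)
      exact this (Set.right_mem_Icc.2 hab)
    by_contra hcon
    push_neg at hcon
    have := key ((eval (x b) V - γ) / 2) (by linarith)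
    linarith
  -- compactness of the sublevel set
  have hcompact : IsCompact {x : Fin n → ℝ | eval x V ≤ γ} := by
    apply Metric.isCompact_of_isClosed_isBounded
    · exact isClosed_le (MvPolynomial.continuous_eval V) continuous_const
    · set R : ℝ := max 1 (γ / δ) with hR
      have hR1 : (1 : ℝ) ≤ R := le_max_left _ _
      apply (Metric.isBounded_closedBall (x := (0 : Fin n → ℝ)) (r := R)).subset
      intro y hy
      simp only [Set.mem_setOf_eq] at hy
      have hT : ∑ j, y j ^ (2 * ℓ) ≤ γ / δ := by
        rw [le_div_iff₀ hδ]
        nlinarith [hVlb y]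
      have hbound : ∀ j, |y j| ≤ R := by
        intro j
        by_cases hyj : |y j| ≤ 1
        · exact hyj.trans hR1
        · push_neg at hyj
          have h2ℓ : 2 * ℓ ≠ 0 := by omega
          have h1 : |y j| ≤ |y j| ^ (2 * ℓ) := le_self_pow₀ hyj.le h2ℓ
          have h2 : |y j| ^ (2 * ℓ) = y j ^ (2 * ℓ) := by
            rw [← abs_pow, abs_of_nonneg]
            rw [mul_comm, pow_mul]
            positivity
          have h3 : y j ^ (2 * ℓ) ≤ ∑ k, y k ^ (2 * ℓ) := by
            apply Finset.single_le_sum (f := fun k => y k ^ (2 * ℓ))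
              (fun k _ => by
                show (0 : ℝ) ≤ y k ^ (2 * ℓ)
                rw [pow_mul]; positivity) (Finset.mem_univ j)
          calc |y j| ≤ y j ^ (2 * ℓ) := h2 ▸ h1
            _ ≤ γ / δ := h3.trans hT
            _ ≤ R := le_max_right _ _
      rw [Metric.mem_closedBall, dist_zero_right]
      rw [pi_norm_le_iff_of_nonneg (by linarith)]
      intro j
      simpa [Real.norm_eq_abs] using hbound j
  refine ⟨hcompact, ?_, ?_⟩
  · -- positive invariance
    intro x hx h0 t ht
    exact inv x hx 0 t le_rfl ht h0
  · -- absorption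
    intro Cs hCs
    obtain ⟨M, hM⟩ := hCs.exists_bound_of_continuousOn
      ((MvPolynomial.continuous_eval V).continuousOn)
    set M' : ℝ := max M γ with hM'
    set tC : ℝ := (M' - γ) / (δ * c) with htC
    have hδc : 0 < δ * c := mul_pos hδ hcpos
    have htC0 : 0 ≤ tC := div_nonneg (sub_nonneg.2 (le_max_right M γ)) hδc.le
    refine ⟨tC, htC0, ?_⟩
    intro x hx hx0 t ht
    -- first, there is a time `s ∈ [0, tC]` with `eval (x s) V ≤ γ`
    have hexists : ∃ s : ℝ, s ∈ Set.Icc 0 tC ∧ eval (x s) V ≤ γ := by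
      by_contra hcon
      push_neg at hcon
      obtain ⟨W', hW'⟩ := deriv_ex x hx
      have hB' : ∀ s : ℝ, HasDerivAt
          (fun s : ℝ => eval (x 0) V - δ * c * s) (-(δ * c)) s := by
        intro s
        have h1 : HasDerivAt (fun s : ℝ => δ * c * s) (δ * c) s := by
          simpa using (hasDerivAt_id s).const_mul (δ * c)
        simpa using h1.const_sub (eval (x 0) V)
      have hsub : Set.Icc (0 : ℝ) tC ⊆ Set.Ici (0 : ℝ) := fun s hs => hs.1
      have hcont : ContinuousOn (fun τ => eval (x τ) V) (Set.Icc 0 tC) :=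
        (contW x hx).mono hsub
      have key := image_le_of_deriv_right_le_deriv_boundary
        (f := fun τ => eval (x τ) V) (f' := W') (a := 0) (b := tC) hcont
        (fun s hs => (hW' s hs.1).1)
        (B := fun s => eval (x 0) V - δ * c * s) (B' := fun _ => -(δ * c))
        (by simp)
        (fun s _ => (hB' s).continuousAt.continuousWithinAt)
        (fun s _ => (hB' s).hasDerivWithinAt)
        (fun s hs => (hW' s hs.1).2
          (hcon s ⟨hs.1, hs.2.le⟩))
      have h1 : eval (x tC) V ≤ eval (x 0) V - δ * c * tC :=
        key (Set.right_mem_Icc.2 htC0)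
      have h2 : eval (x 0) V ≤ M' := le_trans (le_trans (le_abs_self _)
        (hM (x 0) hx0)) (le_max_left M γ)
      have h3 : δ * c * tC = M' - γ := by
        rw [htC, mul_div_cancel₀ _ hδc.ne']
      have h4 : γ < eval (x tC) V := hcon tC ⟨htC0, le_rfl⟩
      linarith
    obtain ⟨s, hs, hsle⟩ := hexists
    exact inv x hx s t hs.1 (hs.2.trans ht) hsle
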